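/- Let c* > 0, let 0 < ε < 1/(2ω), and let α be a real number with 0 < α ≤ ε·(1−ωε). If Λ_ε ≤ c*/ε, then Λ_α ≤ c*/α. -/

import Mathlib

set_option maxHeartbeats 1600000 in
/-- Nesting of the invariant sets: if `0 < α ≤ ε(1-ωε)` and
`Λ_ε ≤ c*/ε`, then `Λ_α ≤ c*/α`. -/
theorem stmt12 (ω κ F x y p q : ℝ)
    (hω : 1 ≤ ω) (hκ : 0 < κ) (hF : 0 ≤ F) (hx : 0 ≤ x) (hy : 0 ≤ y)
    (hp : |p| ≤ (2 / Real.sqrt κ) * F * y) (hq : |q| ≤ ω * x * y)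
    (Λ : ℝ → ℝ)
    (hΛ : ∀ ε : ℝ, Λ ε = x ^ 2 + y ^ 2 + p + (2 / κ) * F ^ 2 - ε * q)
    (cstar : ℝ) (hcstar : 0 < cstar)
    (ε : ℝ) (hε0 : 0 < ε) (hε1 : ε < 1 / (2 * ω))
    (α : ℝ) (hα0 : 0 < α) (hα1 : α ≤ ε * (1 - ω * ε))
    (h : Λ ε ≤ cstar / ε) :
    Λ α ≤ cstar / α := by
  have hω0 : (0:ℝ) < ω := lt_of_lt_of_le one_pos hω
  have hωε : ω * ε < 1 / 2 := by
    have h2 := (lt_div_iff₀ (by positivity : (0:ℝ) < 2 * ω)).mp hε1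
    nlinarith
  have h1 : 0 < 1 - ω * ε := by linarith
  have hsκ : 0 < Real.sqrt κ := Real.sqrt_pos.mpr hκ
  have hκs : Real.sqrt κ ^ 2 = κ := Real.sq_sqrt hκ.le
  -- Claim A : p + (2/κ)F² ≥ -y²/2
  have e1 : (2 / Real.sqrt κ) * F * y = 2 * Real.sqrt κ * F * y / κ := by
    rw [eq_div_iff hκ.ne']
    field_simp
    linear_combination (-F * y) * hκs
  have hp' : -(2 * Real.sqrt κ * F * y / κ) ≤ p := by
    have := (abs_le.mp hp).1
    rw [e1] at this
    linarith
  have h5 : -(κ * (y ^ 2 / 2)) ≤ -(2 * Real.sqrt κ * F * y) + 2 * F ^ 2 := by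
    have hsq := sq_nonneg (2 * F - Real.sqrt κ * y)
    have hκy : Real.sqrt κ ^ 2 * y ^ 2 = κ * y ^ 2 := by rw [hκs]
    nlinarith [hsq, hκy]
  have h6 : -(y ^ 2 / 2) ≤ (-(2 * Real.sqrt κ * F * y) + 2 * F ^ 2) / κ := by
    rw [le_div_iff₀ hκ]
    nlinarith [h5]
  have e2 : (-(2 * Real.sqrt κ * F * y) + 2 * F ^ 2) / κ
      = -(2 * Real.sqrt κ * F * y / κ) + (2 / κ) * F ^ 2 := by ring
  have hA : -(y ^ 2 / 2) ≤ p + (2 / κ) * F ^ 2 := by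
    rw [e2] at h6
    linarith
  -- q bound
  have hq1 : q ≤ ω * (x ^ 2 + y ^ 2) / 2 := by
    have := (abs_le.mp hq).2
    nlinarith [sq_nonneg (x - y)]
  have hLε : (x ^ 2 + y ^ 2 + p + (2 / κ) * F ^ 2 - ε * q) * ε ≤ cstar := by
    rw [hΛ] at h
    exact (le_div_iff₀ hε0).mp h
  have hεα : α ≤ ε :=
    le_trans hα1 (by nlinarith [mul_nonneg hω0.le (mul_nonneg hε0.le hε0.le)])
  -- lower bound for Λ_ε
  have hL0 : (1 - ω * ε) * (x ^ 2 + y ^ 2) / 2 ≤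
      x ^ 2 + y ^ 2 + p + (2 / κ) * F ^ 2 - ε * q := by
    have hεq := mul_le_mul_of_nonneg_left hq1 hε0.le
    nlinarith [hεq, sq_nonneg x]
  have hαω : ω * α ≤ 1 - ω * ε := by
    have h2 := mul_le_mul_of_nonneg_left hα1 hω0.le
    nlinarith [h2, sq_nonneg (1 - ω * ε)]
  have key : (ε - α) * (q * α) ≤
      (ε - α) * (x ^ 2 + y ^ 2 + p + (2 / κ) * F ^ 2 - ε * q) := by
    apply mul_le_mul_of_nonneg_left ?_ (sub_nonneg.mpr hεα)
    calc q * α ≤ (ω * (x ^ 2 + y ^ 2) / 2) * α :=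
          mul_le_mul_of_nonneg_right hq1 hα0.le
      _ ≤ (1 - ω * ε) * (x ^ 2 + y ^ 2) / 2 := by
          have h3 := mul_le_mul_of_nonneg_right hαω
            (add_nonneg (sq_nonneg x) (sq_nonneg y))
          nlinarith [h3]
      _ ≤ _ := hL0
  rw [hΛ, le_div_iff₀ hα0]
  linarith [key, hLε]
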